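/- Let X be a second countable locally compact Hausdorff abelian topological group and let b1, b2 : X → X be continuous endomorphisms such that Ker(b1 − b2) = {0}. Let μ1, μ2 and ν1, ν2 be Borel probability measures on X, all having nonvanishing characteristic functions. Let T : X² → X² be the map T(x1, x2) = (x1 + x2, b1 x1 + b2 x2). If the pushforward of μ1 ⊗ μ2 under T equals the pushforward of ν1 ⊗ ν2 under T, then ν1 = μ1 and ν2 = μ2. -/

import Mathlib

open MeasureTheory

/-- A (continuous) character of a topological abelian group `X`: a continuous
map into the circle group (i.e. unimodular, multiplicative on sums). -/
def IsChar {X : Type*} [TopologicalSpace X] [AddCommGroup X] (χ : X → ℂ) : Prop :=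
  Continuous χ ∧ (∀ x, ‖χ x‖ = 1) ∧ ∀ x₁ x₂, χ (x₁ + x₂) = χ x₁ * χ x₂

/-- The characteristic function `μ̂(y) = ∫ (x, y) dμ(x)` of `μ` does not vanish. -/
def HasNonvanishingCharFun {X : Type*} [TopologicalSpace X] [AddCommGroup X]
    [MeasurableSpace X] (μ : Measure X) : Prop :=
  ∀ χ : X → ℂ, IsChar χ → ∫ x, χ x ∂μ ≠ 0

open Filter Topology Uniformity in
/-- A second countable locally compact Hausdorff topological abelian group is Polish. -/
lemma polishSpace_of_lc_group {X : Type*} [TopologicalSpace X] [AddCommGroup X]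
    [IsTopologicalAddGroup X] [LocallyCompactSpace X] [T2Space X]
    [SecondCountableTopology X] : PolishSpace X := by
  letI : UniformSpace X := IsTopologicalAddGroup.rightUniformSpace X
  haveI : IsUniformAddGroup X := isUniformAddGroup_of_addCommGroup
  haveI : CompleteSpace X := by
    constructor
    intro f hf
    obtain ⟨K, hK, hKmem⟩ := exists_compact_mem_nhds (0 : X)
    have hU : {p : X × X | p.2 - p.1 ∈ K} ∈ 𝓤 X := by
      rw [uniformity_eq_comap_nhds_zero X]
      exact Filter.preimage_mem_comap hKmem
    obtain ⟨t, htf, hts⟩ := (cauchy_iff.1 hf).2 _ hU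
    haveI : f.NeBot := hf.1
    obtain ⟨x₀, hx₀⟩ : t.Nonempty := Filter.nonempty_of_mem htf
    have hsub : t ⊆ (fun k => x₀ + k) '' K := by
      intro x hx
      exact ⟨x - x₀, hts (Set.mk_mem_prod hx₀ hx), by simp⟩
    have hcomp : IsCompact ((fun k => x₀ + k) '' K) :=
      hK.image (continuous_const.add continuous_id)
    have hle : f ≤ 𝓟 ((fun k => x₀ + k) '' K) :=
      Filter.le_principal_iff.2 (Filter.mem_of_superset htf hsub)
    obtain ⟨x, -, hx⟩ := hcomp.exists_clusterPt hle
    exact ⟨x, le_nhds_of_cauchy_adhp hf hx⟩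
  haveI : (𝓤 X).IsCountablyGenerated := by
    rw [uniformity_eq_comap_nhds_zero X]
    infer_instance
  infer_instance

/-- The distribution of `(ξ₁ + ξ₂, b₁ξ₁ + b₂ξ₂)` with `Ker (b₁ - b₂) = {0}`
uniquely determines the distributions of `ξ₁` and `ξ₂`. -/
theorem two_forms_unique_determination
    {X : Type*} [TopologicalSpace X] [AddCommGroup X] [IsTopologicalAddGroup X]
    [LocallyCompactSpace X] [T2Space X] [SecondCountableTopology X]
    [MeasurableSpace X] [BorelSpace X]
    (b₁ b₂ : X →+ X) (hb₁ : Continuous b₁) (hb₂ : Continuous b₂)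
    (hker₁₂ : ∀ x, b₁ x - b₂ x = 0 → x = 0)
    (μ₁ μ₂ ν₁ ν₂ : Measure X)
    [IsProbabilityMeasure μ₁] [IsProbabilityMeasure μ₂]
    [IsProbabilityMeasure ν₁] [IsProbabilityMeasure ν₂]
    (hμ₁ : HasNonvanishingCharFun μ₁) (hμ₂ : HasNonvanishingCharFun μ₂)
    (hν₁ : HasNonvanishingCharFun ν₁) (hν₂ : HasNonvanishingCharFun ν₂)
    (T : X × X → X × X)
    (hT : T = fun q => (q.1 + q.2, b₁ q.1 + b₂ q.2))
    (h : (μ₁.prod μ₂).map T = (ν₁.prod ν₂).map T) :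
    ν₁ = μ₁ ∧ ν₂ = μ₂ := by
  haveI : PolishSpace X := polishSpace_of_lc_group
  -- `T` is continuous
  have hTcont : Continuous T := by
    rw [hT]
    exact (continuous_fst.add continuous_snd).prodMk
      ((hb₁.comp continuous_fst).add (hb₂.comp continuous_snd))
  -- `T` is injective
  have hTinj : Function.Injective T := by
    rw [hT]
    rintro ⟨p1, p2⟩ ⟨q1, q2⟩ hpq
    simp only [Prod.mk.injEq] at hpq
    obtain ⟨h1, h2⟩ := hpq
    have e1 : p1 - q1 = q2 - p2 := by
      rw [sub_eq_sub_iff_add_eq_add, add_comm q2 q1]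
      exact h1
    have h2' : b₁ p1 - b₁ q1 = b₂ q2 - b₂ p2 := by
      rw [sub_eq_sub_iff_add_eq_add, add_comm (b₂ q2) (b₁ q1)]
      exact h2
    have key : b₁ (p1 - q1) - b₂ (p1 - q1) = 0 := by
      rw [sub_eq_zero]
      calc b₁ (p1 - q1) = b₁ p1 - b₁ q1 := map_sub _ _ _
        _ = b₂ q2 - b₂ p2 := h2'
        _ = b₂ (q2 - p2) := (map_sub _ _ _).symm
        _ = b₂ (p1 - q1) := by rw [e1]
    have hd : p1 - q1 = 0 := hker₁₂ _ key
    have hp1 : p1 = q1 := sub_eq_zero.1 hd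
    have hp2 : p2 = q2 := by
      rw [hp1] at h1
      exact add_left_cancel h1
    rw [hp1, hp2]
  have hemb : MeasurableEmbedding T := hTcont.measurableEmbedding hTinj
  -- the product measures agree
  have hprod : μ₁.prod μ₂ = ν₁.prod ν₂ := by
    ext s hs
    have h' := congrArg (fun m : Measure (X × X) => m (T '' s)) h
    simp only [hemb.map_apply, hTinj.preimage_image] at h'
    exact h'
  -- take marginals
  constructor
  · have h1 := congrArg (Measure.map Prod.fst) hprod
    rw [Measure.map_fst_prod, Measure.map_fst_prod, measure_univ, measure_univ,
      one_smul, one_smul] at h1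
    exact h1.symm
  · have h2 := congrArg (Measure.map Prod.snd) hprod
    rw [Measure.map_snd_prod, Measure.map_snd_prod, measure_univ, measure_univ,
      one_smul, one_smul] at h2
    exact h2.symm
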